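/- For every d ≥ 2, the sequence (c_{k-1}(d)/c_k(d))_{k ≥ 1} is decreasing in k. -/

import Mathlib

open Finset Nat

noncomputable def c (d k : ℕ) : ℝ := (Nat.choose (d * k) k : ℝ) / ((d - 1) * k + 1)

lemma fact_ratio (n m : ℕ) : ((n+m)! : ℝ) = (n ! : ℝ) * ∏ i ∈ range m, ((n:ℝ)+i+1) := by
  induction m with
  | zero => simp
  | succ m ih =>
    rw [prod_range_succ, ← mul_assoc, ← ih]
    push_cast [← Nat.add_assoc, Nat.factorial_succ]
    ring

lemma c_eq (d k : ℕ) (hd : 2 ≤ d) :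
    c d k = ((d*k)! : ℝ) / ((k ! : ℝ) * (((d-1)*k+1)! : ℝ)) := by
  have h1 : 1 ≤ d := by omega
  have hk : k ≤ d * k := Nat.le_mul_of_pos_left k (by omega)
  have hsub : d * k - k = (d-1)*k := by
    rw [Nat.sub_one_mul]
  rw [c, Nat.cast_choose ℝ hk, hsub, Nat.factorial_succ]
  have h3 : ((d:ℝ) - 1) * k + 1 = (((d-1)*k+1 : ℕ) : ℝ) := by
    push_cast [Nat.cast_sub h1]; ring
  rw [h3]
  push_cast
  have h2 : (0:ℝ) < ((((d-1)*k)! : ℕ): ℝ) := by positivity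
  have h4 : (0:ℝ) < ((k ! : ℕ) : ℝ) := by positivity
  have h5 : (0:ℝ) < (((d-1)*k : ℕ) : ℝ) + 1 := by positivity
  field_simp

noncomputable def R (d k : ℕ) : ℝ :=
  (((d:ℝ)*k+1)/((k:ℝ)+1)) * ∏ i ∈ range (d-1), ((d:ℝ)*k+i+2)/(((d:ℝ)-1)*k+i+2)

lemma R_pos (d k : ℕ) (hd : 2 ≤ d) : 0 < R d k := by
  have hd' : (2:ℝ) ≤ d := by exact_mod_cast hd
  have hk : (0:ℝ) ≤ k := by positivity
  apply mul_pos
  · positivity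
  · apply prod_pos
    intro i _
    have hi : (0:ℝ) ≤ i := by positivity
    apply _root_.div_pos <;> nlinarith

lemma R_mono (d k : ℕ) (hd : 2 ≤ d) : R d k ≤ R d (k+1) := by
  have hd' : (2:ℝ) ≤ d := by exact_mod_cast hd
  have hk : (0:ℝ) ≤ k := by positivity
  push_cast [R]
  apply mul_le_mul
  · rw [div_le_div_iff₀ (by positivity) (by positivity)]
    nlinarith
  · apply prod_le_prod
    · intro i _
      have hi : (0:ℝ) ≤ i := by positivity
      have : (0:ℝ) < ((d:ℝ)-1)*k+i+2 := by nlinarith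
      positivity
    · intro i _
      have hi : (0:ℝ) ≤ i := by positivity
      rw [div_le_div_iff₀ (by nlinarith) (by nlinarith)]
      nlinarith
  · apply prod_nonneg
    intro i _
    have hi : (0:ℝ) ≤ i := by positivity
    have : (0:ℝ) < ((d:ℝ)-1)*k+i+2 := by nlinarith
    positivity
  · positivity

lemma c_pos (d k : ℕ) (hd : 2 ≤ d) : 0 < c d k := by
  rw [c_eq d k hd]
  positivity

lemma split_prod (n : ℕ) (a : ℝ) :
    ∏ i ∈ range (n+1), (a+i+1) = (a+1) * ∏ i ∈ range n, (a+i+2) := by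
  rw [prod_range_succ']
  have h : ∏ i ∈ range n, (a+↑(i+1)+1) = ∏ i ∈ range n, (a+i+2) :=
    prod_congr rfl fun i _ => by push_cast; ring
  rw [h]
  push_cast
  ring

lemma c_succ (d k : ℕ) (hd : 2 ≤ d) : c d (k+1) = c d k * R d k := by
  obtain ⟨m, rfl⟩ : ∃ m, d = m + 2 := ⟨d-2, by omega⟩
  have hm : m + 2 - 1 = m + 1 := rfl
  have e1 : (m+2) * (k+1) = (m+2)*k + (m+2) := by ring
  have e2 : (m+1) * (k+1) + 1 = ((m+1)*k + 1) + (m+1) := by ring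
  have f1 : (((m+2)*(k+1))! : ℝ)
      = (((m+2)*k)! : ℝ) * ∏ i ∈ range (m+2), (((m:ℝ)+2)*k+i+1) := by
    rw [e1, fact_ratio]
    congr 1
    exact prod_congr rfl fun i _ => by push_cast; ring
  have f2 : (((m+1)*(k+1)+1)! : ℝ)
      = (((m+1)*k+1)! : ℝ) * ∏ i ∈ range (m+1), (((m:ℝ)+1)*k+i+2) := by
    rw [e2, fact_ratio]
    congr 1
    exact prod_congr rfl fun i _ => by push_cast; ring
  have f3 : ((k+1)! : ℝ) = ((k:ℝ)+1) * (k ! : ℝ) := by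
    rw [Nat.factorial_succ]; push_cast; ring
  have hsplit : ∏ i ∈ range (m+2), (((m:ℝ)+2)*k+i+1)
      = (((m:ℝ)+2)*k+1) * ∏ i ∈ range (m+1), (((m:ℝ)+2)*k+i+2) :=
    split_prod (m+1) _
  have hR : R (m+2) k = ((((m:ℝ)+2)*k+1)/((k:ℝ)+1))
      * ∏ i ∈ range (m+1), (((m:ℝ)+2)*k+i+2)/(((m:ℝ)+1)*k+i+2) := by
    rw [R, hm]
    congr 1
    · push_cast; ring
    · refine prod_congr rfl fun i _ => ?_
      push_cast
      ring_nf
  rw [c_eq _ (k+1) hd, c_eq _ k hd, hm, f1, f2, f3, hsplit, hR, prod_div_distrib]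
  have hk : (0:ℝ) ≤ k := by positivity
  set P : ℝ := ∏ i ∈ range (m+1), (((m:ℝ)+2)*k+i+2) with hP
  set Q : ℝ := ∏ i ∈ range (m+1), (((m:ℝ)+1)*k+i+2) with hQ
  have hQ0 : (0:ℝ) < Q := by
    apply prod_pos
    intro i _
    have hi : (0:ℝ) ≤ i := by positivity
    nlinarith
  have h2 : (0:ℝ) < ((k ! : ℕ) : ℝ) := by positivity
  have h3 : (0:ℝ) < (((((m+1)*k+1)!) : ℕ) : ℝ) := by positivity
  push_cast
  field_simp

/-- For every `d ≥ 2`, the sequence `(c_{k-1}(d)/c_k(d))_{k ≥ 1}` is decreasing in `k`. -/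
theorem ratio_decreasing (d : ℕ) (hd : 2 ≤ d) :
    ∀ j k : ℕ, 1 ≤ j → j ≤ k → c d (k - 1) / c d k ≤ c d (j - 1) / c d j := by
  intro j k hj hjk
  obtain ⟨a, rfl⟩ : ∃ a, j = a + 1 := ⟨j - 1, by omega⟩
  obtain ⟨b, rfl⟩ : ∃ b, k = b + 1 := ⟨k - 1, by omega⟩
  simp only [Nat.add_sub_cancel]
  have hab : a ≤ b := by omega
  have hRm : R d a ≤ R d b :=
    (monotone_nat_of_le_succ (fun n => R_mono d n hd)) hab
  have key : ∀ n, c d n / c d (n + 1) = 1 / R d n := by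
    intro n
    rw [c_succ d n hd, div_mul_eq_div_div, div_self (c_pos d n hd).ne']
  rw [key a, key b]
  exact one_div_le_one_div_of_le (R_pos d a hd) hRm
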